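/- The parity expectation values of the hierarchical parity model satisfy the exact recursion P_{k,p} = [sinh(βJ_{k,p}) + cosh(βJ_{k,p}) P_{k-1,2p-1} P_{k-1,2p}] / [cosh(βJ_{k,p}) + sinh(βJ_{k,p}) P_{k-1,2p-1} P_{k-1,2p}], with initial condition P_{0,p} = tanh(βJ_{0,p}). -/

import Mathlib

open Real BigOperators Finset

noncomputable section

/-- Map a Boolean spin to ±1. -/
def spin (b : Bool) : ℝ := if b then 1 else -1

/-- Embed index of left half. -/
def finLeft {k : ℕ} (i : Fin (2^k)) : Fin (2^(k+1)) :=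
  ⟨i.val, lt_of_lt_of_le i.isLt (Nat.pow_le_pow_right (by norm_num) (Nat.le_succ k))⟩

/-- Embed index of right half. -/
def finRight {k : ℕ} (i : Fin (2^k)) : Fin (2^(k+1)) :=
  ⟨2^k + i.val, by
    have h := i.isLt
    have h2 : 2^(k+1) = 2^k + 2^k := by rw [pow_succ]; ring
    omega⟩

/-- Parity (product of ±1 spins) of a configuration. -/
def parityProd {m : ℕ} (s : Fin m → Bool) : ℝ := ∏ i, spin (s i)

/-- Hamiltonian of sub-system (k,p) of the hierarchical parity model,
as a function of its own 2^k spins. -/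
def Hsub (J : ℕ → ℕ → ℝ) : (k : ℕ) → ℕ → (Fin (2^k) → Bool) → ℝ
  | 0, p, s => -(J 0 p) * spin (s ⟨0, Nat.two_pow_pos 0⟩)
  | (k+1), p, s =>
      Hsub J k (2*p-1) (fun i => s (finLeft i)) +
      Hsub J k (2*p) (fun i => s (finRight i)) -
      J (k+1) p * parityProd s

/-- Partition function of sub-system (k,p). -/
def Z (J : ℕ → ℕ → ℝ) (β : ℝ) (k p : ℕ) : ℝ :=
  ∑ s : Fin (2^k) → Bool, Real.exp (-β * Hsub J k p s)

/-- Thermal expectation of the parity of sub-system (k,p). -/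
def Pexp (J : ℕ → ℕ → ℝ) (β : ℝ) (k p : ℕ) : ℝ :=
  (∑ s : Fin (2^k) → Bool, parityProd s * Real.exp (-β * Hsub J k p s)) / Z J β k p

lemma two_pow_succ' (k : ℕ) : 2^(k+1) = 2^k + 2^k := by rw [pow_succ]; ring

/-- Splitting a configuration into its two halves. -/
def pairEquiv (k : ℕ) : (Fin (2^(k+1)) → Bool) ≃ (Fin (2^k) → Bool) × (Fin (2^k) → Bool) where
  toFun s := (fun i => s (finLeft i), fun i => s (finRight i))
  invFun ab i := if h : i.val < 2^k then ab.1 ⟨i.val, h⟩ else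
    ab.2 ⟨i.val - 2^k, by have h1 := i.isLt; have h2 := two_pow_succ' k; omega⟩
  left_inv s := by
    funext i
    dsimp only
    by_cases h : i.val < 2^k
    · rw [dif_pos h]; congr 1
    · rw [dif_neg h]
      congr 1
      apply Fin.ext
      have h1 := i.isLt
      have h2 := two_pow_succ' k
      simp [finRight]
      omega
  right_inv ab := by
    apply Prod.ext
    · funext i
      have h : (finLeft i).val < 2^k := i.isLt
      simp only [finLeft] at h ⊢
      exact dif_pos h
    · funext i
      have h : ¬ ((finRight i).val < 2^k) := by simp [finRight]
      simp only [finRight] at h ⊢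
      refine (dif_neg h).trans ?_
      exact congrArg ab.2 (Fin.ext (by simp))

lemma parity_split {k : ℕ} (s : Fin (2^(k+1)) → Bool) :
    parityProd s = parityProd (fun i => s (finLeft i)) * parityProd (fun i => s (finRight i)) := by
  unfold parityProd
  rw [show (∏ i, spin (s i)) =
      ∏ i : Fin (2^k + 2^k), spin (s (Fin.cast (two_pow_succ' k).symm i)) from
    Fintype.prod_equiv (finCongr (two_pow_succ' k)) _ _ (fun i => by congr 1),
    Fin.prod_univ_add]
  congr 1

lemma spin_mul_self (b : Bool) : spin b * spin b = 1 := by cases b <;> simp [spin]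

lemma parity_mul_self {m : ℕ} (s : Fin m → Bool) : parityProd s * parityProd s = 1 := by
  unfold parityProd
  rw [← Finset.prod_mul_distrib]
  simp [spin_mul_self]

lemma exp_mul_pm (x ε : ℝ) (hε : ε * ε = 1) :
    Real.exp (x * ε) = Real.cosh x + ε * Real.sinh x := by
  rcases mul_self_eq_one_iff.mp hε with h | h <;> subst h
  · simpa using (Real.cosh_add_sinh x).symm
  · rw [mul_neg_one, ← Real.cosh_sub_sinh x]; ring

lemma Z_pos (J : ℕ → ℕ → ℝ) (β : ℝ) (k p : ℕ) : 0 < Z J β k p :=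
  Finset.sum_pos (fun s _ => Real.exp_pos _) Finset.univ_nonempty

/-- Numerator of `Pexp`. -/
def Npar (J : ℕ → ℕ → ℝ) (β : ℝ) (k p : ℕ) : ℝ :=
  ∑ s : Fin (2^k) → Bool, parityProd s * Real.exp (-β * Hsub J k p s)

lemma sum_pair_split {k : ℕ} (X Y : (Fin (2^k) → Bool) → ℝ) :
    ∑ a : Fin (2^k) → Bool, ∑ b : Fin (2^k) → Bool, X a * Y b = (∑ a, X a) * (∑ b, Y b) := by
  rw [Finset.sum_mul_sum]

lemma Z_succ (J : ℕ → ℕ → ℝ) (β : ℝ) (k p : ℕ) :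
    Z J β (k+1) p = Real.cosh (β * J (k+1) p) * (Z J β k (2*p-1) * Z J β k (2*p)) +
      Real.sinh (β * J (k+1) p) * (Npar J β k (2*p-1) * Npar J β k (2*p)) := by
  unfold Z Npar
  rw [Fintype.sum_equiv (pairEquiv k)
    (fun s => Real.exp (-β * Hsub J (k+1) p s))
    (fun ab => Real.cosh (β * J (k+1) p) *
        (Real.exp (-β * Hsub J k (2*p-1) ab.1) * Real.exp (-β * Hsub J k (2*p) ab.2)) +
      Real.sinh (β * J (k+1) p) *
        ((parityProd ab.1 * Real.exp (-β * Hsub J k (2*p-1) ab.1)) *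
         (parityProd ab.2 * Real.exp (-β * Hsub J k (2*p) ab.2))))
    (fun s => by
      dsimp only [pairEquiv, Equiv.coe_fn_mk]
      show Real.exp (-β * Hsub J (k+1) p s) = _
      rw [show Hsub J (k+1) p s = Hsub J k (2*p-1) (fun i => s (finLeft i)) +
          Hsub J k (2*p) (fun i => s (finRight i)) - J (k+1) p * parityProd s from rfl,
        parity_split s]
      set πa := parityProd (fun i => s (finLeft i))
      set πb := parityProd (fun i => s (finRight i))
      have hε : (πa * πb) * (πa * πb) = 1 := by
        have h1 := parity_mul_self (fun i => s (finLeft i))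
        have h2 := parity_mul_self (fun i => s (finRight i))
        calc (πa * πb) * (πa * πb) = (πa * πa) * (πb * πb) := by ring
        _ = 1 := by rw [h1, h2]; ring
      rw [show -β * (Hsub J k (2*p-1) (fun i => s (finLeft i)) +
            Hsub J k (2*p) (fun i => s (finRight i)) - J (k+1) p * (πa * πb)) =
          (-β * Hsub J k (2*p-1) (fun i => s (finLeft i))) +
          ((-β * Hsub J k (2*p) (fun i => s (finRight i))) + (β * J (k+1) p) * (πa * πb))
        by ring, Real.exp_add, Real.exp_add, exp_mul_pm _ _ hε]
      ring)]
  rw [Fintype.sum_prod_type]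
  simp only [Finset.sum_add_distrib, ← Finset.mul_sum]
  simp only [← Finset.sum_mul]

lemma Npar_succ (J : ℕ → ℕ → ℝ) (β : ℝ) (k p : ℕ) :
    Npar J β (k+1) p = Real.cosh (β * J (k+1) p) * (Npar J β k (2*p-1) * Npar J β k (2*p)) +
      Real.sinh (β * J (k+1) p) * (Z J β k (2*p-1) * Z J β k (2*p)) := by
  unfold Z Npar
  rw [Fintype.sum_equiv (pairEquiv k)
    (fun s => parityProd s * Real.exp (-β * Hsub J (k+1) p s))
    (fun ab => Real.cosh (β * J (k+1) p) *
        ((parityProd ab.1 * Real.exp (-β * Hsub J k (2*p-1) ab.1)) *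
         (parityProd ab.2 * Real.exp (-β * Hsub J k (2*p) ab.2))) +
      Real.sinh (β * J (k+1) p) *
        (Real.exp (-β * Hsub J k (2*p-1) ab.1) * Real.exp (-β * Hsub J k (2*p) ab.2)))
    (fun s => by
      dsimp only [pairEquiv, Equiv.coe_fn_mk]
      show parityProd s * Real.exp (-β * Hsub J (k+1) p s) = _
      rw [show Hsub J (k+1) p s = Hsub J k (2*p-1) (fun i => s (finLeft i)) +
          Hsub J k (2*p) (fun i => s (finRight i)) - J (k+1) p * parityProd s from rfl,
        parity_split s]
      set πa := parityProd (fun i => s (finLeft i))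
      set πb := parityProd (fun i => s (finRight i))
      have h1 : πa * πa = 1 := parity_mul_self _
      have h2 : πb * πb = 1 := parity_mul_self _
      have hε : (πa * πb) * (πa * πb) = 1 := by
        calc (πa * πb) * (πa * πb) = (πa * πa) * (πb * πb) := by ring
        _ = 1 := by rw [h1, h2]; ring
      rw [show -β * (Hsub J k (2*p-1) (fun i => s (finLeft i)) +
            Hsub J k (2*p) (fun i => s (finRight i)) - J (k+1) p * (πa * πb)) =
          (-β * Hsub J k (2*p-1) (fun i => s (finLeft i))) +
          ((-β * Hsub J k (2*p) (fun i => s (finRight i))) + (β * J (k+1) p) * (πa * πb))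
        by ring, Real.exp_add, Real.exp_add, exp_mul_pm _ _ hε]
      set ea := Real.exp (-β * Hsub J k (2*p-1) fun i => s (finLeft i))
      set eb := Real.exp (-β * Hsub J k (2*p) fun i => s (finRight i))
      show πa * πb * (ea * (eb * (Real.cosh (β * J (k+1) p) +
          πa * πb * Real.sinh (β * J (k+1) p)))) =
        Real.cosh (β * J (k+1) p) * ((πa * ea) * (πb * eb)) +
        Real.sinh (β * J (k+1) p) * (ea * eb)
      linear_combination (Real.sinh (β * J (k+1) p) * ea * eb * (πb * πb)) * h1 +
        (Real.sinh (β * J (k+1) p) * ea * eb) * h2)]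
  rw [Fintype.sum_prod_type]
  simp only [Finset.sum_add_distrib, ← Finset.mul_sum]
  simp only [← Finset.sum_mul]

/-- parity recursion with initial condition. -/
theorem parity_recursion (J : ℕ → ℕ → ℝ) (β : ℝ) (hβ : 0 < β) :
    (∀ k p : ℕ, 1 ≤ p → Pexp J β (k+1) p =
      (Real.sinh (β * J (k+1) p) +
        Real.cosh (β * J (k+1) p) * Pexp J β k (2*p-1) * Pexp J β k (2*p)) /
      (Real.cosh (β * J (k+1) p) +
        Real.sinh (β * J (k+1) p) * Pexp J β k (2*p-1) * Pexp J β k (2*p))) ∧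
    (∀ p : ℕ, Pexp J β 0 p = Real.tanh (β * J 0 p)) := by
  have hP : ∀ k p : ℕ, Pexp J β k p = Npar J β k p / Z J β k p := fun _ _ => rfl
  constructor
  · intro k p _
    have hZL := Z_pos J β k (2*p-1)
    have hZR := Z_pos J β k (2*p)
    have hZ := Z_pos J β (k+1) p
    set c := Real.cosh (β * J (k+1) p) with hc
    set h := Real.sinh (β * J (k+1) p) with hh
    set NL := Npar J β k (2*p-1)
    set NR := Npar J β k (2*p)
    set ZL := Z J β k (2*p-1)
    set ZR := Z J β k (2*p)
    have hZs : Z J β (k+1) p = c * (ZL * ZR) + h * (NL * NR) := Z_succ J β k p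
    have hNs : Npar J β (k+1) p = c * (NL * NR) + h * (ZL * ZR) := Npar_succ J β k p
    have hB : (c + h * (NL / ZL) * (NR / ZR)) * (ZL * ZR) = Z J β (k+1) p := by
      rw [hZs]; field_simp
    have hBne : c + h * (NL / ZL) * (NR / ZR) ≠ 0 := by
      intro h0
      rw [h0, zero_mul] at hB
      exact hZ.ne hB
    rw [hP (k+1), show Pexp J β k (2*p-1) = NL/ZL from rfl, show Pexp J β k (2*p) = NR/ZR from rfl, hNs, hZs]
    rw [div_eq_div_iff (by rw [← hZs]; exact hZ.ne') hBne]
    field_simp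
    ring
  · intro p
    haveI : Unique (Fin (2^0)) :=
      ⟨⟨⟨0, Nat.two_pow_pos 0⟩⟩, fun a => Fin.ext (by have h := a.isLt; simp only [pow_zero, Nat.lt_one_iff] at h; simp [h])⟩
    have hsum : ∀ F : (Fin (2^0) → Bool) → ℝ,
        ∑ s : Fin (2^0) → Bool, F s = F (fun _ => true) + F (fun _ => false) := by
      intro F
      rw [show (∑ s : Fin (2^0) → Bool, F s) = ∑ b : Bool, F (fun _ => b) from
        Fintype.sum_equiv (Equiv.funUnique (Fin (2^0)) Bool) _ _
          (fun s => congrArg F (funext fun i => congrArg s (Subsingleton.elim i _)))]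
      exact Fintype.sum_bool _
    have hpt : parityProd (fun _ : Fin (2^0) => true) = 1 := by
      simp [parityProd, spin]
    have hpf : parityProd (fun _ : Fin (2^0) => false) = -1 := by
      simp [parityProd, spin]
    have hd : (0:ℝ) < Real.exp (β * J 0 p) + Real.exp (-(β * J 0 p)) := by positivity
    rw [Pexp, Z, hsum, hsum, hpt, hpf]
    rw [show Hsub J 0 p (fun _ => true) = -(J 0 p) * 1 by simp [Hsub, spin]]
    rw [show Hsub J 0 p (fun _ => false) = -(J 0 p) * (-1) by simp [Hsub, spin]]
    rw [Real.tanh_eq_sinh_div_cosh, Real.sinh_eq, Real.cosh_eq]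
    rw [div_eq_div_iff (by positivity) (by positivity)]
    ring_nf
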